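/- Fix an integer k ≥ 1, λ₀, b, V₀, G > 0, rates u₁,…,u_k > 0, and g ≤ G on [0,b]. Let b_t = b - (2k+1)(log t)/t. The contribution to EZ_k(t) from fitness vectors (x₁,…,x_k) with some x_i ≤ b_t is at most t^k V₀ u₁⋯u_k G^k ∫ e^{(λ₀+x₁+⋯+x_k)t} dx over that region, which is o(t^{-2k} e^{(λ₀+kb)t}) as t → ∞. -/

import Mathlib

open Real MeasureTheory Filter

-- helper: integral over finite union ≤ sum
lemma helper_iUnion {α : Type*} [MeasurableSpace α] {μ : Measure α} {ι : Type*} [Fintype ι]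
    {A : ι → Set α} {f : α → ℝ} (hf : ∀ x, 0 ≤ f x)
    (hint : ∀ i, IntegrableOn f (A i) μ) :
    ∫ x in ⋃ i, A i, f x ∂μ ≤ ∑ i, ∫ x in A i, f x ∂μ := by
  have hU : IntegrableOn f (⋃ i, A i) μ := integrableOn_finite_iUnion.2 hint
  have h1 : ENNReal.ofReal (∫ x in ⋃ i, A i, f x ∂μ)
      = ∫⁻ x in ⋃ i, A i, ENNReal.ofReal (f x) ∂μ :=
    ofReal_integral_eq_lintegral_ofReal hU (Filter.Eventually.of_forall hf)
  have h2 : ∀ i, ENNReal.ofReal (∫ x in A i, f x ∂μ)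
      = ∫⁻ x in A i, ENNReal.ofReal (f x) ∂μ := fun i =>
    ofReal_integral_eq_lintegral_ofReal (hint i) (Filter.Eventually.of_forall hf)
  have h3 : (∫⁻ x in ⋃ i, A i, ENNReal.ofReal (f x) ∂μ)
      ≤ ∑ i, ∫⁻ x in A i, ENNReal.ofReal (f x) ∂μ := by
    refine le_trans (lintegral_iUnion_le _ _) ?_
    rw [tsum_fintype]
  have h4 : ENNReal.ofReal (∫ x in ⋃ i, A i, f x ∂μ)
      ≤ ENNReal.ofReal (∑ i, ∫ x in A i, f x ∂μ) := by
    rw [h1, ENNReal.ofReal_sum_of_nonneg (fun i _ => integral_nonneg hf)]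
    simpa [h2] using h3
  have hnn : 0 ≤ ∑ i, ∫ x in A i, f x ∂μ :=
    Finset.sum_nonneg fun i _ => integral_nonneg hf
  exact (ENNReal.ofReal_le_ofReal_iff hnn).1 h4

lemma helper_pi {k : ℕ} (I : Fin k → Set ℝ) (hI : ∀ i, MeasurableSet (I i)) (f : ℝ → ℝ) :
    ∫ x : Fin k → ℝ in Set.pi Set.univ I, ∏ i, f (x i) = ∏ i, ∫ y in I i, f y := by
  rw [← integral_indicator (MeasurableSet.univ_pi hI)]
  have h : (Set.pi Set.univ I).indicator (fun x : Fin k → ℝ => ∏ i, f (x i))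
      = fun x => ∏ i, (I i).indicator f (x i) := by
    funext x
    by_cases h : x ∈ Set.pi Set.univ I
    · rw [Set.indicator_of_mem h]
      exact Finset.prod_congr rfl fun i _ =>
        (Set.indicator_of_mem (h i (Set.mem_univ i)) f).symm
    · rw [Set.indicator_of_notMem h]
      rw [Set.mem_univ_pi] at h
      push_neg at h
      obtain ⟨i, hi⟩ := h
      exact (Finset.prod_eq_zero (Finset.mem_univ i) (Set.indicator_of_notMem hi f)).symm
  rw [h, MeasureTheory.integral_fintype_prod_volume_eq_prod (𝕜 := ℝ) (ι := Fin k)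
    (fun i y => (I i).indicator f y)]
  exact Finset.prod_congr rfl fun i _ => integral_indicator (hI i)

lemma helper_exp_int {t c : ℝ} (ht : 0 < t) (hc : 0 ≤ c) :
    ∫ y in Set.Icc (0:ℝ) c, Real.exp (y * t) ≤ Real.exp (c * t) / t := by
  have h1 : ∫ y in Set.Icc (0:ℝ) c, Real.exp (y * t)
      = ∫ y in (0:ℝ)..c, Real.exp (y * t) := by
    rw [MeasureTheory.integral_Icc_eq_integral_Ioc, intervalIntegral.integral_of_le hc]
  rw [h1, intervalIntegral.integral_comp_mul_right Real.exp ht.ne']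
  rw [integral_exp]
  rw [smul_eq_mul, zero_mul, Real.exp_zero]
  rw [div_eq_inv_mul]
  have : Real.exp (c * t) - 1 ≤ Real.exp (c * t) := by linarith
  exact mul_le_mul_of_nonneg_left this (inv_nonneg.2 ht.le)

lemma helper_S_closed {k : ℕ} (t : ℝ) :
    IsClosed {s : Fin k → ℝ | (∀ i, s i ∈ Set.Icc (0:ℝ) t) ∧ Monotone s} := by
  have h1 : IsClosed {s : Fin k → ℝ | ∀ i, s i ∈ Set.Icc (0:ℝ) t} := by
    have : {s : Fin k → ℝ | ∀ i, s i ∈ Set.Icc (0:ℝ) t}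
        = Set.pi Set.univ (fun _ => Set.Icc (0:ℝ) t) := by
      ext s; simp [Set.mem_pi, Pi.le_def, forall_and]
    rw [this]
    exact isClosed_set_pi fun i _ => isClosed_Icc
  have h2 : IsClosed {s : Fin k → ℝ | Monotone s} := by
    have : {s : Fin k → ℝ | Monotone s}
        = ⋂ (i : Fin k), ⋂ (j : Fin k), ⋂ (_ : i ≤ j), {s : Fin k → ℝ | s i ≤ s j} := by
      ext s
      simp only [Set.mem_iInter, Set.mem_setOf_eq]
      exact ⟨fun h i j hij => h hij, fun h a b hab => h a b hab⟩
    rw [this]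
    exact isClosed_iInter fun i => isClosed_iInter fun j => isClosed_iInter fun _ =>
      isClosed_le (continuous_apply i) (continuous_apply j)
  exact h1.inter h2

lemma helper_S_sub {k : ℕ} (t : ℝ) :
    {s : Fin k → ℝ | (∀ i, s i ∈ Set.Icc (0:ℝ) t) ∧ Monotone s}
      ⊆ Set.Icc (0 : Fin k → ℝ) (fun _ => t) := by
  rintro s ⟨h1, -⟩
  exact ⟨fun i => (h1 i).1, fun i => (h1 i).2⟩

lemma helper_inner {k : ℕ} (lam0 t : ℝ) (ht : 0 ≤ t) (x : Fin k → ℝ) (hx : ∀ i, 0 ≤ x i) :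
    (∫ s in {s : Fin k → ℝ | (∀ i, s i ∈ Set.Icc (0:ℝ) t) ∧ Monotone s},
        Real.exp (lam0 * t + ∑ i, x i * (t - s i)))
      ≤ t ^ k * Real.exp ((lam0 + ∑ i, x i) * t) := by
  set S := {s : Fin k → ℝ | (∀ i, s i ∈ Set.Icc (0:ℝ) t) ∧ Monotone s} with hS
  have hScl : IsClosed S := helper_S_closed t
  have hSsub := helper_S_sub (k := k) t
  have hScomp : IsCompact S := (isCompact_Icc).of_isClosed_subset hScl hSsub
  have hcont : Continuous fun s : Fin k → ℝ => Real.exp (lam0 * t + ∑ i, x i * (t - s i)) := by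
    apply Real.continuous_exp.comp
    apply Continuous.add continuous_const
    exact continuous_finset_sum _ fun i _ =>
      (continuous_const.mul (continuous_const.sub (continuous_apply i)))
  have hint : IntegrableOn (fun s : Fin k → ℝ => Real.exp (lam0 * t + ∑ i, x i * (t - s i))) S :=
    hcont.continuousOn.integrableOn_compact hScomp
  have hmono : ∀ s ∈ S, Real.exp (lam0 * t + ∑ i, x i * (t - s i))
      ≤ Real.exp ((lam0 + ∑ i, x i) * t) := by
    intro s hs
    apply Real.exp_le_exp.2
    have h : ∀ i, x i * (t - s i) ≤ x i * t := fun i =>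
      mul_le_mul_of_nonneg_left (by linarith [(hs.1 i).1]) (hx i)
    calc lam0 * t + ∑ i, x i * (t - s i) ≤ lam0 * t + ∑ i, x i * t :=
          add_le_add (le_refl _) (Finset.sum_le_sum fun i _ => h i)
      _ = (lam0 + ∑ i, x i) * t := by rw [add_mul, Finset.sum_mul]
  calc (∫ s in S, Real.exp (lam0 * t + ∑ i, x i * (t - s i)))
      ≤ ∫ _ in S, Real.exp ((lam0 + ∑ i, x i) * t) := by
        apply setIntegral_mono_on hint (integrableOn_const hScomp.measure_lt_top.ne)
          hScl.measurableSet hmono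
    _ = (volume S).toReal * Real.exp ((lam0 + ∑ i, x i) * t) := by
        rw [setIntegral_const, smul_eq_mul]
        rfl
    _ ≤ t ^ k * Real.exp ((lam0 + ∑ i, x i) * t) := by
        apply mul_le_mul_of_nonneg_right _ (Real.exp_nonneg _)
        have h1 : volume S ≤ ENNReal.ofReal (t ^ k) := by
          calc volume S ≤ volume (Set.Icc (0 : Fin k → ℝ) (fun _ => t)) := measure_mono hSsub
            _ = ENNReal.ofReal (t ^ k) := by
              rw [Real.volume_Icc_pi]
              simp [← ENNReal.ofReal_pow ht]
        exact ENNReal.toReal_le_of_le_ofReal (pow_nonneg ht k) h1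

lemma helper_X_closed {k : ℕ} (b c : ℝ) :
    IsClosed {x : Fin k → ℝ | x ∈ Set.Icc (0 : Fin k → ℝ) (fun _ => b) ∧ ∃ i, x i ≤ c} := by
  have : {x : Fin k → ℝ | x ∈ Set.Icc (0 : Fin k → ℝ) (fun _ => b) ∧ ∃ i, x i ≤ c}
      = Set.Icc (0 : Fin k → ℝ) (fun _ => b) ∩ ⋃ i, {x : Fin k → ℝ | x i ≤ c} := by
    ext x; simp [Set.mem_iUnion]
  rw [this]
  exact isClosed_Icc.inter (isClosed_iUnion_of_finite fun i =>
    isClosed_le (continuous_apply i) continuous_const)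

lemma helper_part1 {k : ℕ} (lam0 b V0 G : ℝ)
    (hV0 : 0 < V0) (hG : 0 < G)
    (u : Fin k → ℝ) (hu : ∀ i, 0 < u i)
    (g : ℝ → ℝ)
    (hbdd : ∀ x ∈ Set.Icc 0 b, 0 ≤ g x ∧ g x ≤ G) (t c : ℝ) (ht : 0 ≤ t) :
    (V0 * (∏ i, u i) *
        ∫ x in {x : Fin k → ℝ | x ∈ Set.Icc (0 : Fin k → ℝ) (fun _ => b) ∧
            ∃ i, x i ≤ c},
          (∏ i, g (x i)) *
            ∫ s in {s : Fin k → ℝ | (∀ i, s i ∈ Set.Icc (0:ℝ) t) ∧ Monotone s},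
              Real.exp (lam0 * t + ∑ i, x i * (t - s i)))
      ≤ t ^ k * V0 * (∏ i, u i) * G ^ k *
          ∫ x in {x : Fin k → ℝ | x ∈ Set.Icc (0 : Fin k → ℝ) (fun _ => b) ∧
              ∃ i, x i ≤ c},
            Real.exp ((lam0 + ∑ i, x i) * t) := by
  set X := {x : Fin k → ℝ | x ∈ Set.Icc (0 : Fin k → ℝ) (fun _ => b) ∧ ∃ i, x i ≤ c} with hX
  have hXcl : IsClosed X := helper_X_closed b c
  have hXsub : X ⊆ Set.Icc (0 : Fin k → ℝ) (fun _ => b) := fun x hx => hx.1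
  have hXcomp : IsCompact X := (isCompact_Icc).of_isClosed_subset hXcl hXsub
  have hmem : ∀ x ∈ X, ∀ i, x i ∈ Set.Icc (0:ℝ) b := fun x hx i => ⟨hx.1.1 i, hx.1.2 i⟩
  have hcont : Continuous fun x : Fin k → ℝ => Real.exp ((lam0 + ∑ i, x i) * t) := by
    apply Real.continuous_exp.comp
    apply Continuous.mul _ continuous_const
    exact continuous_const.add (continuous_finset_sum _ fun i _ => continuous_apply i)
  have hgi : Integrable (fun x : Fin k → ℝ =>
      (G ^ k * t ^ k) * Real.exp ((lam0 + ∑ i, x i) * t)) (volume.restrict X) :=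
    ((continuous_const.mul hcont).continuousOn.integrableOn_compact hXcomp)
  have hf0 : 0 ≤ᵐ[volume.restrict X] fun x : Fin k → ℝ =>
      (∏ i, g (x i)) *
        ∫ s in {s : Fin k → ℝ | (∀ i, s i ∈ Set.Icc (0:ℝ) t) ∧ Monotone s},
          Real.exp (lam0 * t + ∑ i, x i * (t - s i)) := by
    apply ae_restrict_of_forall_mem hXcl.measurableSet
    intro x hx
    exact mul_nonneg (Finset.prod_nonneg fun i _ => (hbdd _ (hmem x hx i)).1)
      (setIntegral_nonneg (helper_S_closed t).measurableSet fun s _ => Real.exp_nonneg _)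
  have hle : (fun x : Fin k → ℝ =>
      (∏ i, g (x i)) *
        ∫ s in {s : Fin k → ℝ | (∀ i, s i ∈ Set.Icc (0:ℝ) t) ∧ Monotone s},
          Real.exp (lam0 * t + ∑ i, x i * (t - s i)))
      ≤ᵐ[volume.restrict X] fun x =>
        (G ^ k * t ^ k) * Real.exp ((lam0 + ∑ i, x i) * t) := by
    apply ae_restrict_of_forall_mem hXcl.measurableSet
    intro x hx
    have h1 : (∏ i, g (x i)) ≤ G ^ k := by
      calc (∏ i, g (x i)) ≤ ∏ _i : Fin k, G :=
            Finset.prod_le_prod (fun i _ => (hbdd _ (hmem x hx i)).1)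
              (fun i _ => (hbdd _ (hmem x hx i)).2)
        _ = G ^ k := by simp
    have h2 := helper_inner lam0 t ht x (fun i => (hmem x hx i).1)
    have h3 : 0 ≤ ∫ s in {s : Fin k → ℝ | (∀ i, s i ∈ Set.Icc (0:ℝ) t) ∧ Monotone s},
        Real.exp (lam0 * t + ∑ i, x i * (t - s i)) :=
      setIntegral_nonneg (helper_S_closed t).measurableSet fun s _ => Real.exp_nonneg _
    calc (∏ i, g (x i)) *
          ∫ s in {s : Fin k → ℝ | (∀ i, s i ∈ Set.Icc (0:ℝ) t) ∧ Monotone s},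
            Real.exp (lam0 * t + ∑ i, x i * (t - s i))
        ≤ G ^ k * (t ^ k * Real.exp ((lam0 + ∑ i, x i) * t)) :=
          mul_le_mul h1 h2 h3 (pow_nonneg hG.le k)
      _ = (G ^ k * t ^ k) * Real.exp ((lam0 + ∑ i, x i) * t) := by ring
  have key := integral_mono_of_nonneg hf0 hgi hle
  rw [MeasureTheory.integral_const_mul] at key
  have hP : (0:ℝ) ≤ V0 * ∏ i, u i :=
    mul_nonneg hV0.le (Finset.prod_nonneg fun i _ => (hu i).le)
  calc V0 * (∏ i, u i) * ∫ x in X, (∏ i, g (x i)) *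
          ∫ s in {s : Fin k → ℝ | (∀ i, s i ∈ Set.Icc (0:ℝ) t) ∧ Monotone s},
            Real.exp (lam0 * t + ∑ i, x i * (t - s i))
      ≤ V0 * (∏ i, u i) * ((G ^ k * t ^ k) *
          ∫ x in X, Real.exp ((lam0 + ∑ i, x i) * t)) :=
        mul_le_mul_of_nonneg_left key hP
    _ = t ^ k * V0 * (∏ i, u i) * G ^ k *
          ∫ x in X, Real.exp ((lam0 + ∑ i, x i) * t) := by ring

lemma helper_partB {k : ℕ} (lam0 b : ℝ) (hb : 0 < b) (t c : ℝ) (ht : 0 < t) (hc : 0 ≤ c) :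
    (∫ x in {x : Fin k → ℝ | x ∈ Set.Icc (0 : Fin k → ℝ) (fun _ => b) ∧
        ∃ i, x i ≤ c}, Real.exp ((lam0 + ∑ i, x i) * t))
      ≤ k * (Real.exp (lam0 * t) * Real.exp ((((k:ℝ) - 1) * b + c) * t) / t ^ k) := by
  set X := {x : Fin k → ℝ | x ∈ Set.Icc (0 : Fin k → ℝ) (fun _ => b) ∧ ∃ i, x i ≤ c} with hX
  set top : Fin k → Fin k → ℝ := fun i j => if j = i then c else b with htop
  set A : Fin k → Set (Fin k → ℝ) :=
    fun i => Set.pi Set.univ (fun j => Set.Icc 0 (top i j)) with hA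
  have htopnn : ∀ i j, 0 ≤ top i j := by
    intro i j; simp only [htop]; split <;> [exact hc; exact hb.le]
  have hAIcc : ∀ i, A i = Set.Icc (0 : Fin k → ℝ) (top i) := by
    intro i; rw [hA]; exact Set.pi_univ_Icc (0 : Fin k → ℝ) (top i)
  have hAcomp : ∀ i, IsCompact (A i) := fun i => (hAIcc i) ▸ isCompact_Icc
  have hcont : Continuous fun x : Fin k → ℝ => Real.exp ((lam0 + ∑ i, x i) * t) := by
    apply Real.continuous_exp.comp
    apply Continuous.mul _ continuous_const
    exact continuous_const.add (continuous_finset_sum _ fun i _ => continuous_apply i)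
  have hint : ∀ i, IntegrableOn
      (fun x : Fin k → ℝ => Real.exp ((lam0 + ∑ i, x i) * t)) (A i) :=
    fun i => hcont.continuousOn.integrableOn_compact (hAcomp i)
  have hsub : X ⊆ ⋃ i, A i := by
    rintro x ⟨hIcc, i, hi⟩
    refine Set.mem_iUnion.2 ⟨i, ?_⟩
    rw [hA]
    intro j _
    simp only [htop]
    by_cases h : j = i
    · subst h; simp only [if_pos rfl]; exact ⟨hIcc.1 j, hi⟩
    · simp only [if_neg h]; exact ⟨hIcc.1 j, hIcc.2 j⟩
  have hUnn : 0 ≤ᵐ[volume.restrict (⋃ i, A i)]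
      fun x : Fin k → ℝ => Real.exp ((lam0 + ∑ i, x i) * t) :=
    Filter.Eventually.of_forall fun x => Real.exp_nonneg _
  have step1 : (∫ x in X, Real.exp ((lam0 + ∑ i, x i) * t))
      ≤ ∫ x in ⋃ i, A i, Real.exp ((lam0 + ∑ i, x i) * t) :=
    setIntegral_mono_set (integrableOn_finite_iUnion.2 hint) hUnn hsub.eventuallyLE
  have step2 : (∫ x in ⋃ i, A i, Real.exp ((lam0 + ∑ i, x i) * t))
      ≤ ∑ i, ∫ x in A i, Real.exp ((lam0 + ∑ i, x i) * t) :=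
    helper_iUnion (fun x => Real.exp_nonneg _) hint
  have hrw : ∀ x : Fin k → ℝ, Real.exp ((lam0 + ∑ i, x i) * t)
      = Real.exp (lam0 * t) * ∏ j, Real.exp (x j * t) := by
    intro x
    rw [add_mul, Real.exp_add, Finset.sum_mul, Real.exp_sum]
  have step3 : ∀ i, (∫ x in A i, Real.exp ((lam0 + ∑ i, x i) * t))
      ≤ Real.exp (lam0 * t) * Real.exp ((((k:ℝ) - 1) * b + c) * t) / t ^ k := by
    intro i
    have e1 : (∫ x in A i, Real.exp ((lam0 + ∑ i, x i) * t))
        = Real.exp (lam0 * t) * ∏ j, ∫ y in Set.Icc (0:ℝ) (top i j), Real.exp (y * t) := by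
      simp_rw [hrw]
      rw [MeasureTheory.integral_const_mul, hA,
        helper_pi (fun j => Set.Icc 0 (top i j)) (fun j => measurableSet_Icc)
          (fun y => Real.exp (y * t))]
    rw [e1]
    have e2 : (∏ j, ∫ y in Set.Icc (0:ℝ) (top i j), Real.exp (y * t))
        ≤ ∏ j, Real.exp (top i j * t) / t := by
      apply Finset.prod_le_prod
      · exact fun j _ => setIntegral_nonneg measurableSet_Icc fun y _ => Real.exp_nonneg _
      · exact fun j _ => helper_exp_int ht (htopnn i j)
    have e3 : (∏ j, Real.exp (top i j * t) / t)
        = Real.exp ((((k:ℝ) - 1) * b + c) * t) / t ^ k := by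
      rw [Finset.prod_div_distrib, Finset.prod_const, Finset.card_univ, Fintype.card_fin,
        ← Real.exp_sum]
      congr 2
      rw [← Finset.sum_mul]
      congr 1
      have : ∀ j, top i j = b + (if j = i then c - b else 0) := by
        intro j; simp only [htop]; split <;> ring
      simp_rw [this]
      rw [Finset.sum_add_distrib, Finset.sum_const, Finset.card_univ, Fintype.card_fin,
        Finset.sum_ite_eq' Finset.univ i (fun _ => c - b)]
      simp only [Finset.mem_univ, if_pos]
      push_cast
      ring
    calc Real.exp (lam0 * t) * ∏ j, ∫ y in Set.Icc (0:ℝ) (top i j), Real.exp (y * t)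
        ≤ Real.exp (lam0 * t) * ∏ j, Real.exp (top i j * t) / t :=
          mul_le_mul_of_nonneg_left e2 (Real.exp_nonneg _)
      _ = Real.exp (lam0 * t) * Real.exp ((((k:ℝ) - 1) * b + c) * t) / t ^ k := by
          rw [e3]; ring
  calc (∫ x in X, Real.exp ((lam0 + ∑ i, x i) * t))
      ≤ ∑ i, ∫ x in A i, Real.exp ((lam0 + ∑ i, x i) * t) := le_trans step1 step2
    _ ≤ ∑ _i : Fin k, Real.exp (lam0 * t) * Real.exp ((((k:ℝ) - 1) * b + c) * t) / t ^ k :=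
        Finset.sum_le_sum fun i _ => step3 i
    _ = k * (Real.exp (lam0 * t) * Real.exp ((((k:ℝ) - 1) * b + c) * t) / t ^ k) := by
        rw [Finset.sum_const, Finset.card_univ, Fintype.card_fin, nsmul_eq_mul]

theorem stmt_8 (k : ℕ) (hk : 1 ≤ k) (lam0 b V0 G : ℝ)
    (hlam0 : 0 < lam0) (hb : 0 < b) (hV0 : 0 < V0) (hG : 0 < G)
    (u : Fin k → ℝ) (hu : ∀ i, 0 < u i)
    (g : ℝ → ℝ) (hmeas : Measurable g)
    (hbdd : ∀ x ∈ Set.Icc 0 b, 0 ≤ g x ∧ g x ≤ G) :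
    (∀ᶠ t : ℝ in atTop,
        (V0 * (∏ i, u i) *
            ∫ x in {x : Fin k → ℝ | x ∈ Set.Icc (0 : Fin k → ℝ) (fun _ => b) ∧
                ∃ i, x i ≤ b - (2 * k + 1) * Real.log t / t},
              (∏ i, g (x i)) *
                ∫ s in {s : Fin k → ℝ | (∀ i, s i ∈ Set.Icc (0:ℝ) t) ∧ Monotone s},
                  Real.exp (lam0 * t + ∑ i, x i * (t - s i)))
          ≤ t ^ k * V0 * (∏ i, u i) * G ^ k *
              ∫ x in {x : Fin k → ℝ | x ∈ Set.Icc (0 : Fin k → ℝ) (fun _ => b) ∧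
                  ∃ i, x i ≤ b - (2 * k + 1) * Real.log t / t},
                Real.exp ((lam0 + ∑ i, x i) * t)) ∧
      Tendsto (fun t : ℝ =>
          (t ^ (2 * k) * Real.exp (-(lam0 + k * b) * t)) *
            (V0 * (∏ i, u i) *
              ∫ x in {x : Fin k → ℝ | x ∈ Set.Icc (0 : Fin k → ℝ) (fun _ => b) ∧
                  ∃ i, x i ≤ b - (2 * k + 1) * Real.log t / t},
                (∏ i, g (x i)) *
                  ∫ s in {s : Fin k → ℝ | (∀ i, s i ∈ Set.Icc (0:ℝ) t) ∧ Monotone s},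
                    Real.exp (lam0 * t + ∑ i, x i * (t - s i))))
        atTop (nhds 0) := by
  have hP : (0:ℝ) < ∏ i, u i := Finset.prod_pos fun i _ => hu i
  constructor
  · filter_upwards [eventually_ge_atTop (0:ℝ)] with t ht
    exact helper_part1 lam0 b V0 G hV0 hG u hu g hbdd t _ ht
  · set D : ℝ := k * V0 * (∏ i, u i) * G ^ k with hD
    have hlog : Tendsto (fun t : ℝ => (2 * (k:ℝ) + 1) * Real.log t / t) atTop (nhds 0) := by
      have h0 : Tendsto (fun t : ℝ => Real.log t / t) atTop (nhds 0) :=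
        Real.isLittleO_log_id_atTop.tendsto_div_nhds_zero
      have h1 := h0.const_mul (2 * (k:ℝ) + 1)
      simpa [mul_div_assoc, mul_zero] using h1
    have hev : ∀ᶠ t : ℝ in atTop, (2 * (k:ℝ) + 1) * Real.log t / t ≤ b :=
      (hlog.eventually_lt_const hb).mono fun t h => h.le
    apply squeeze_zero' (g := fun t : ℝ => D / t)
    · filter_upwards [eventually_ge_atTop (0:ℝ)] with t ht
      apply mul_nonneg (mul_nonneg (pow_nonneg ht _) (Real.exp_nonneg _))
      apply mul_nonneg (mul_nonneg hV0.le hP.le)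
      apply setIntegral_nonneg (helper_X_closed b _).measurableSet
      intro x hx
      exact mul_nonneg (Finset.prod_nonneg fun i _ => (hbdd _ ⟨hx.1.1 i, hx.1.2 i⟩).1)
        (setIntegral_nonneg (helper_S_closed t).measurableSet fun s _ => Real.exp_nonneg _)
    · filter_upwards [eventually_ge_atTop (1:ℝ), hev] with t ht1 htb
      have ht0 : (0:ℝ) < t := lt_of_lt_of_le one_pos ht1
      have hc0 : (0:ℝ) ≤ b - (2 * (k:ℝ) + 1) * Real.log t / t := sub_nonneg.2 htb
      have step1 := helper_part1 lam0 b V0 G hV0 hG u hu g hbdd t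
        (b - (2 * (k:ℝ) + 1) * Real.log t / t) ht0.le
      have step2 := helper_partB (k := k) lam0 b hb t
        (b - (2 * (k:ℝ) + 1) * Real.log t / t) ht0 hc0
      have hfac : (0:ℝ) ≤ t ^ (2*k) * Real.exp (-(lam0 + k * b) * t) := by positivity
      have hexplog : Real.exp ((2 * (k:ℝ) + 1) * Real.log t) = t ^ (2*k+1) := by
        have h : (2 * (k:ℝ) + 1) = ((2*k+1 : ℕ) : ℝ) := by push_cast; ring
        rw [h, Real.exp_nat_mul, Real.exp_log ht0]
      have hE : Real.exp ((((k:ℝ) - 1) * b + (b - (2 * (k:ℝ) + 1) * Real.log t / t)) * t)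
          = Real.exp ((k:ℝ) * b * t) / t ^ (2*k+1) := by
        have h1 : (((k:ℝ) - 1) * b + (b - (2 * (k:ℝ) + 1) * Real.log t / t)) * t
            = (k:ℝ) * b * t - (2 * (k:ℝ) + 1) * Real.log t := by
          field_simp
          ring
        rw [h1, Real.exp_sub, hexplog]
      have hexp1 : Real.exp (-(lam0 + (k:ℝ) * b) * t)
          * (Real.exp (lam0 * t) * Real.exp ((k:ℝ) * b * t)) = 1 := by
        rw [← Real.exp_add, ← Real.exp_add,
          show -(lam0 + (k:ℝ) * b) * t + (lam0 * t + (k:ℝ) * b * t) = 0 by ring, Real.exp_zero]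
      have htk : (t:ℝ) ^ k ≠ 0 := pow_ne_zero _ ht0.ne'
      have hq : t ^ (2*k) / t ^ (2*k+1) = 1 / t := by
        rw [pow_succ]
        field_simp
      calc (t ^ (2*k) * Real.exp (-(lam0 + k * b) * t)) *
              (V0 * (∏ i, u i) *
                ∫ x in {x : Fin k → ℝ | x ∈ Set.Icc (0 : Fin k → ℝ) (fun _ => b) ∧
                    ∃ i, x i ≤ b - (2 * k + 1) * Real.log t / t},
                  (∏ i, g (x i)) *
                    ∫ s in {s : Fin k → ℝ | (∀ i, s i ∈ Set.Icc (0:ℝ) t) ∧ Monotone s},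
                      Real.exp (lam0 * t + ∑ i, x i * (t - s i)))
          ≤ (t ^ (2*k) * Real.exp (-(lam0 + k * b) * t)) *
              (t ^ k * V0 * (∏ i, u i) * G ^ k *
                ∫ x in {x : Fin k → ℝ | x ∈ Set.Icc (0 : Fin k → ℝ) (fun _ => b) ∧
                    ∃ i, x i ≤ b - (2 * k + 1) * Real.log t / t},
                  Real.exp ((lam0 + ∑ i, x i) * t)) :=
            mul_le_mul_of_nonneg_left step1 hfac
        _ ≤ (t ^ (2*k) * Real.exp (-(lam0 + k * b) * t)) *
              (t ^ k * V0 * (∏ i, u i) * G ^ k *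
                ((k:ℝ) * (Real.exp (lam0 * t) *
                  Real.exp ((((k:ℝ) - 1) * b + (b - (2 * (k:ℝ) + 1) * Real.log t / t)) * t)
                  / t ^ k))) := by
            apply mul_le_mul_of_nonneg_left _ hfac
            apply mul_le_mul_of_nonneg_left step2
            positivity
        _ = D / t := by
            rw [hE, hD]
            calc (t ^ (2*k) * Real.exp (-(lam0 + (k:ℝ) * b) * t)) *
                    (t ^ k * V0 * (∏ i, u i) * G ^ k *
                      ((k:ℝ) * (Real.exp (lam0 * t) *
                        (Real.exp ((k:ℝ) * b * t) / t ^ (2*k+1)) / t ^ k)))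
                = ((k:ℝ) * V0 * (∏ i, u i) * G ^ k) *
                    ((Real.exp (-(lam0 + (k:ℝ) * b) * t) *
                      (Real.exp (lam0 * t) * Real.exp ((k:ℝ) * b * t))) *
                      (t ^ (2*k) / t ^ (2*k+1)) * (t ^ k / t ^ k)) := by ring
              _ = (k:ℝ) * V0 * (∏ i, u i) * G ^ k / t := by
                  rw [hexp1, div_self htk, hq]
                  ring
    · exact Tendsto.div_atTop tendsto_const_nhds tendsto_id
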